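/- The function π(μ) ∝ (1 + log[(1 + r e^{μ²/2})/(1 + r e^{-μ²/2})])^{-1} is integrable on ℝ (so the approximate sum-DB prior π^{SL} for the mixture model is proper), and it is symmetric about 0 with mode at 0. -/
import Mathlib


open Real MeasureTheory

/-- The approximate sum-DB prior kernel for the mixture model,
`π(μ) = (1 + log[(1 + r e^{μ²/2})/(1 + r e^{-μ²/2})])⁻¹` with `r = (1-p)/p`,
is integrable on `ℝ` (hence can be normalized to a proper prior), symmetric about
`0`, and has its (strict) mode at `0`. -/
theorem mixture_approxDB_proper (p : ℝ) (hp : p ∈ Set.Ioo (0:ℝ) 1) :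
    let r := (1 - p) / p
    let prior : ℝ → ℝ := fun μ =>
      (1 + Real.log ((1 + r * Real.exp (μ^2/2)) / (1 + r * Real.exp (-(μ^2)/2))))⁻¹
    Integrable prior ∧ (∀ μ, prior (-μ) = prior μ) ∧ (∀ μ : ℝ, μ ≠ 0 → prior μ < prior 0) := by
  intro r prior
  have hr : 0 < r := div_pos (by linarith [hp.2]) hp.1
  set L : ℝ → ℝ := fun μ =>
    Real.log ((1 + r * Real.exp (μ^2/2)) / (1 + r * Real.exp (-(μ^2)/2))) with hLdef
  have hA : ∀ μ : ℝ, 0 < 1 + r * Real.exp (μ^2/2) := fun μ => by positivity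
  have hB : ∀ μ : ℝ, 0 < 1 + r * Real.exp (-(μ^2)/2) := fun μ => by positivity
  have hBA : ∀ μ : ℝ, 1 + r * Real.exp (-(μ^2)/2) ≤ 1 + r * Real.exp (μ^2/2) := fun μ => by
    have : Real.exp (-(μ^2)/2) ≤ Real.exp (μ^2/2) := Real.exp_le_exp.2 (by nlinarith [sq_nonneg μ])
    nlinarith
  have hL0 : ∀ μ : ℝ, 0 ≤ L μ := fun μ => by
    apply Real.log_nonneg
    rw [le_div_iff₀ (hB μ)]
    simpa using hBA μ
  have h1L : ∀ μ : ℝ, 0 < 1 + L μ := fun μ => by linarith [hL0 μ]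
  -- lower bound on L
  set c : ℝ := Real.log (1 + r) - Real.log r with hc
  have hcpos : 0 < c := by
    have := Real.log_lt_log hr (by linarith : r < 1 + r)
    linarith
  have hL : ∀ μ : ℝ, μ^2/2 - c ≤ L μ := by
    intro μ
    have hlogA : Real.log r + μ^2/2 ≤ Real.log (1 + r * Real.exp (μ^2/2)) := by
      have h1 : Real.log (r * Real.exp (μ^2/2)) ≤ Real.log (1 + r * Real.exp (μ^2/2)) :=
        Real.log_le_log (by positivity) (by linarith [(hA μ)])
      rwa [Real.log_mul hr.ne' (Real.exp_ne_zero _), Real.log_exp] at h1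
    have hlogB : Real.log (1 + r * Real.exp (-(μ^2)/2)) ≤ Real.log (1 + r) := by
      apply Real.log_le_log (hB μ)
      have : Real.exp (-(μ^2)/2) ≤ 1 := Real.exp_le_one_iff.2 (by nlinarith [sq_nonneg μ])
      nlinarith
    have : L μ = Real.log (1 + r * Real.exp (μ^2/2)) - Real.log (1 + r * Real.exp (-(μ^2)/2)) :=
      Real.log_div (hA μ).ne' (hB μ).ne'
    rw [this]; simp only [hc]; linarith
  have hcont : Continuous prior := by
    apply Continuous.inv₀
    · exact continuous_const.add ((Continuous.div (by continuity) (by continuity)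
        (fun μ => (hB μ).ne')).log (fun μ => (div_pos (hA μ) (hB μ)).ne'))
    · exact fun μ => (h1L μ).ne'
  set a : ℝ := max 4 (3 + 4 * c) with ha
  have ha4 : (4:ℝ) ≤ a := le_max_left _ _
  have hac : 3 + 4 * c ≤ a := le_max_right _ _
  have hbound : ∀ μ : ℝ, 1 + μ^2 ≤ a * (1 + L μ) := by
    intro μ
    rcases le_or_gt (μ^2) (2 + 4*c) with h | h
    · nlinarith [hL0 μ]
    · nlinarith [hL μ, hL0 μ]
  refine ⟨?_, ?_, ?_⟩
  · apply Integrable.mono ((integrable_inv_one_add_sq).const_mul a) hcont.aestronglyMeasurable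
    filter_upwards with μ
    have hp1 : 0 < 1 + μ^2 := by positivity
    rw [Real.norm_eq_abs, Real.norm_eq_abs, abs_of_nonneg (inv_nonneg.2 (h1L μ).le),
      abs_of_nonneg (by positivity : (0:ℝ) ≤ a * (1 + μ^2)⁻¹)]
    rw [← div_eq_mul_inv, le_div_iff₀ hp1, inv_mul_eq_div, div_le_iff₀ (h1L μ)]
    linarith [hbound μ]
  · intro μ; simp [prior, neg_sq]
  · intro μ hμ
    have h0 : prior 0 = 1 := by
      have hone : ((1:ℝ) + r * Real.exp ((0:ℝ)^2/2)) / (1 + r * Real.exp (-((0:ℝ)^2)/2)) = 1 := by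
        rw [show ((0:ℝ)^2/2) = 0 by norm_num, show (-((0:ℝ)^2)/2) = 0 by norm_num, Real.exp_zero]
        exact div_self (by positivity)
      simp only [prior]
      rw [hone, Real.log_one]
      norm_num
    rw [h0]
    have hlt : 0 < L μ := by
      apply Real.log_pos
      rw [lt_div_iff₀ (hB μ)]
      have : Real.exp (-(μ^2)/2) < Real.exp (μ^2/2) := by
        apply Real.exp_lt_exp.2
        have : 0 < μ^2 := by positivity
        nlinarith
      nlinarith
    have : 1 < 1 + L μ := by linarith
    simpa [prior] using inv_lt_one_of_one_lt₀ this
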